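/- (Theorem 2, smoothness part.) Consider a continuous game with N players, strategy sets S_i ⊆ ℝ^d_+, joint strategy space S = ∏_{i=1}^N S_i, payoffs π_i : S → ℝ, and social function γ : ℝ^{Nd}_+ → ℝ with γ(0) = 0. Suppose: γ is monotone; γ is playerwise DR-submodular; γ has generalized submodularity ratio at least η ∈ (0, 1], i.e. for all s, s' ∈ S, ∑_{i=1}^N [γ(s_i + s'_i, s_{-i}) − γ(s)] ≥ η (γ(s + s') − γ(s)); and π_i(s) ≥ γ(s) − γ(0, s_{-i}) for every player i and every s ∈ S. Then for all outcomes s, s⋆ ∈ S, ∑_{i=1}^N π_i(s⋆_i, s_{-i}) ≥ η γ(s⋆) − η γ(s). -/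

import Mathlib

/-- `f` is monotone on `X`: `f x ≤ f y` whenever `x ≤ y` in `X`. -/
def MonotoneOnSet {ι : Type*} (X : Set (ι → ℝ)) (f : (ι → ℝ) → ℝ) : Prop :=
  ∀ ⦃x⦄, x ∈ X → ∀ ⦃y⦄, y ∈ X → x ≤ y → f x ≤ f y

/-- `f` is DR-submodular on `X`. -/
def DRSubmodularOn {ι : Type*} [DecidableEq ι] (X : Set (ι → ℝ)) (f : (ι → ℝ) → ℝ) : Prop :=
  ∀ ⦃x y : ι → ℝ⦄, x ∈ X → y ∈ X → x ≤ y →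
    ∀ i : ι, ∀ k : ℝ, 0 ≤ k →
      x + Pi.single i k ∈ X → y + Pi.single i k ∈ X →
        f (x + Pi.single i k) - f x ≥ f (y + Pi.single i k) - f y

/-- Replace player `i`'s block of the joint strategy `s` by `v`, i.e. the outcome
`(v, s₋ᵢ)`. -/
def upd {N d : ℕ} (s : Fin N × Fin d → ℝ) (i : Fin N) (v : Fin d → ℝ) :
    Fin N × Fin d → ℝ :=
  fun q => if q.1 = i then v q.2 else s q

/-- The joint strategy space `S = ∏ᵢ Sᵢ`, viewed inside `ℝ^{Nd}`. -/
def joint {N d : ℕ} (S : Fin N → Set (Fin d → ℝ)) : Set (Fin N × Fin d → ℝ) :=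
  {s | ∀ i : Fin N, (fun r => s (i, r)) ∈ S i}

/-- `γ` is playerwise DR-submodular on `ℝ^{Nd}_+`: for every player `i` and fixed strategies
of the other players, the map `sᵢ ↦ γ(sᵢ, s₋ᵢ)` is DR-submodular on `ℝ^d_+`. -/
def PlayerwiseDRSubmodular {N d : ℕ} (γ : (Fin N × Fin d → ℝ) → ℝ) : Prop :=
  ∀ (i : Fin N) (s : Fin N × Fin d → ℝ), 0 ≤ s →
    DRSubmodularOn {v : Fin d → ℝ | 0 ≤ v} (fun v => γ (upd s i v))

lemma dr_vec {d : ℕ} {f : (Fin d → ℝ) → ℝ}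
    (hf : DRSubmodularOn {v : Fin d → ℝ | 0 ≤ v} f)
    {x y : Fin d → ℝ} (hx : 0 ≤ x) (hy : 0 ≤ y) (hxy : x ≤ y)
    {v : Fin d → ℝ} (hv : 0 ≤ v) :
    f (x + v) - f x ≥ f (y + v) - f y := by
  suffices h : ∀ T : Finset (Fin d),
      f (x + fun l => if l ∈ T then v l else 0) - f x ≥
      f (y + fun l => if l ∈ T then v l else 0) - f y by
    have := h Finset.univ
    simpa using this
  intro T
  induction T using Finset.induction with
  | empty => simp [show (fun _ : Fin d => (0:ℝ)) = 0 from rfl]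
  | @insert i T hi ih =>
    set w : Fin d → ℝ := fun l => if l ∈ T then v l else 0 with hw
    have hw0 : 0 ≤ w := by
      intro l; by_cases h : l ∈ T
      · simpa [hw, h] using hv l
      · simp [hw, h]
    have heq : (fun l => if l ∈ insert i T then v l else 0) = w + Pi.single i (v i) := by
      funext l
      by_cases h : l = i
      · subst h; simp [hw, hi, Pi.single_apply]
      · simp [hw, Pi.single_apply, h, Finset.mem_insert]
    rw [heq, ← add_assoc, ← add_assoc]
    have key := hf (x := x + w) (y := y + w)
      (by intro l; exact add_nonneg (hx l) (hw0 l))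
      (by intro l; exact add_nonneg (hy l) (hw0 l))
      (by intro l; exact add_le_add_left (hxy l) _)
      i (v i) (hv i)
      (by intro l; by_cases h : l = i
          · subst h; simp only [Pi.add_apply, Pi.single_apply, if_pos rfl, if_true]
            have := hx l; have := hw0 l; have := hv l
            simp only [Pi.zero_apply] at *; linarith
          · simp only [Pi.add_apply, Pi.single_apply, if_neg h, add_zero]
            have := hx l; have := hw0 l
            simp only [Pi.zero_apply] at *; linarith)
      (by intro l; by_cases h : l = i
          · subst h; simp only [Pi.add_apply, Pi.single_apply, if_pos rfl, if_true]
            have := hy l; have := hw0 l; have := hv l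
            simp only [Pi.zero_apply] at *; linarith
          · simp only [Pi.add_apply, Pi.single_apply, if_neg h, add_zero]
            have := hy l; have := hw0 l
            simp only [Pi.zero_apply] at *; linarith)
    linarith

/-- Theorem 2 (smoothness part): if the monotone social function `γ` is playerwise
DR-submodular, has generalized submodularity ratio at least `η`, and the payoff condition (ii)
holds, then the game is `(η, η)`-smooth. -/
theorem generalized_submodularity_smooth {N d : ℕ}
    (S : Fin N → Set (Fin d → ℝ)) (hS : ∀ i, ∀ v ∈ S i, 0 ≤ v)
    (π : Fin N → (Fin N × Fin d → ℝ) → ℝ)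
    (γ : (Fin N × Fin d → ℝ) → ℝ) (hγ0 : γ 0 = 0)
    (hmono : MonotoneOnSet {x : Fin N × Fin d → ℝ | 0 ≤ x} γ)
    (hplayer : PlayerwiseDRSubmodular γ)
    (η : ℝ) (hη0 : 0 < η) (hη1 : η ≤ 1)
    (hgen : ∀ s ∈ joint S, ∀ s' ∈ joint S,
      ∑ i : Fin N, (γ (upd s i (fun r => s (i, r) + s' (i, r))) - γ s) ≥
        η * (γ (s + s') - γ s))
    (hpayoff : ∀ i : Fin N, ∀ s ∈ joint S, π i s ≥ γ s - γ (upd s i 0)) :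
    ∀ s ∈ joint S, ∀ sstar ∈ joint S,
      ∑ i : Fin N, π i (upd s i (fun r => sstar (i, r))) ≥ η * γ sstar - η * γ s := by
  intro s hs sstar hsstar
  have hs0 : (0 : Fin N × Fin d → ℝ) ≤ s := fun q => hS q.1 _ (hs q.1) q.2
  have hsstar0 : (0 : Fin N × Fin d → ℝ) ≤ sstar := fun q => hS q.1 _ (hsstar q.1) q.2
  have key : ∀ i : Fin N, π i (upd s i (fun r => sstar (i, r))) ≥
      γ (upd s i (fun r => s (i, r) + sstar (i, r))) - γ s := by
    intro i
    set t := upd s i (fun r => sstar (i, r)) with ht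
    have htS : t ∈ joint S := by
      intro j
      by_cases h : j = i
      · subst h; simpa [ht, upd] using hsstar j
      · simpa [ht, upd, h] using hs j
    have h1 := hpayoff i t htS
    have h2 : upd t i 0 = upd s i 0 := by
      funext q; by_cases h : q.1 = i <;> simp [upd, ht, h]
    have h3 := dr_vec (f := fun v => γ (upd s i v)) (hplayer i s hs0)
      (x := 0) (y := fun r => s (i, r)) le_rfl
      (fun r => hs0 (i, r)) (fun r => hs0 (i, r))
      (v := fun r => sstar (i, r)) (fun r => hsstar0 (i, r))
    have e1 : (0 : Fin d → ℝ) + (fun r => sstar (i, r)) = fun r => sstar (i, r) := by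
      funext r; simp
    have e2 : upd s i (fun r => s (i, r)) = s := by
      funext q
      rcases q with ⟨j, r⟩
      by_cases h : j = i
      · subst h; simp [upd]
      · simp [upd, h]
    have e3 : ((fun r => s (i, r)) + fun r => sstar (i, r)) =
        fun r => s (i, r) + sstar (i, r) := rfl
    have e4 : upd s i 0 = upd s i (0 : Fin d → ℝ) := rfl
    rw [e1, e2, e3] at h3
    have h30 : γ t - γ (upd s i (0 : Fin d → ℝ)) ≥
        γ (upd s i fun r => s (i, r) + sstar (i, r)) - γ s := h3
    rw [h2] at h1
    linarith
  have hsum : ∑ i : Fin N, π i (upd s i (fun r => sstar (i, r))) ≥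
      ∑ i : Fin N, (γ (upd s i (fun r => s (i, r) + sstar (i, r))) - γ s) :=
    Finset.sum_le_sum fun i _ => key i
  have hg := hgen s hs sstar hsstar
  have hmono' : γ sstar ≤ γ (s + sstar) := by
    apply hmono hsstar0 (fun q => add_nonneg (hs0 q) (hsstar0 q))
    intro q
    show sstar q ≤ s q + sstar q
    have := hs0 q
    simp only [Pi.zero_apply] at this
    linarith
  have : η * (γ sstar - γ s) ≤ η * (γ (s + sstar) - γ s) := by
    apply mul_le_mul_of_nonneg_left _ hη0.le
    linarith
  calc ∑ i : Fin N, π i (upd s i (fun r => sstar (i, r)))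
      ≥ ∑ i : Fin N, (γ (upd s i (fun r => s (i, r) + sstar (i, r))) - γ s) := hsum
    _ ≥ η * (γ (s + sstar) - γ s) := hg
    _ ≥ η * (γ sstar - γ s) := this
    _ = η * γ sstar - η * γ s := by ring
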